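/- Let M_t ≥ 1, M_r ≥ 1 be integers, M_* = min(M_t, M_r), b > 0 real, and let d* : [0, M_*] → ℝ be the piecewise-linear function connecting the points (k, (M_t − k)(M_r − k)) for k = 0, 1, …, M_*. For each n ≥ 1 define Δ_n = sup over all t ∈ ℝ^n with t_i ≥ 0 and Σ_{i=1}^n t_i = 1 and all r ∈ ℝ^n with 0 ≤ r_1 ≤ ⋯ ≤ r_n ≤ M_*, of min_{0 ≤ k ≤ n} { d*(r_{k+1}) + b·Σ_{i=1}^k t_i r_i } (where d*(r_{n+1}) is interpreted as 0). Define c_0 = 0, c_i = c_{i−1} + (|M_r − M_t| + 2i − 1)·ln((M_* − i + 1)/(M_* − i)) for i = 1, …, M_* − 1, and c_{M_*} = +∞. Then, for the unique p ∈ {1, …, M_*} with c_{p−1} ≤ b < c_p, lim_{n→∞} Δ_n = Σ_{i=1}^{p−1} (|M_r − M_t| + 2i − 1) + (M_* − p + 1)(|M_r − M_t| + 2p − 1)·(1 − e^{−(b − c_{p−1})/(|M_r − M_t| + 2p − 1)}). -/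

import Mathlib

open Filter Finset

namespace Stmt4Aux

noncomputable def sR (Mt Mr : ℕ) (j : ℕ) : ℝ := (Mt:ℝ) + Mr - 2*j - 1

noncomputable def gam (j : ℕ) (x : ℝ) : ℝ := min (max x j) (j+1)

noncomputable def dS (Mt Mr : ℕ) (x : ℝ) : ℝ :=
  ∑ j ∈ Finset.range (min Mt Mr), sR Mt Mr j * ((j+1) - gam j x)

noncomputable def FS (Mt Mr : ℕ) (x : ℝ) : ℝ :=
  ∑ j ∈ Finset.range (min Mt Mr), sR Mt Mr j * Real.log ((j+1) / gam j x)

lemma sR_ge_one {Mt Mr j : ℕ} (hj : j < min Mt Mr) : 1 ≤ sR Mt Mr j := by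
  have h1 : j + 1 ≤ Mt := by omega
  have h2 : j + 1 ≤ Mr := by omega
  have : ((j:ℝ) + 1) ≤ Mt := by exact_mod_cast h1
  have : ((j:ℝ) + 1) ≤ Mr := by exact_mod_cast h2
  unfold sR; nlinarith [this]

lemma sR_nonneg {Mt Mr j : ℕ} (hj : j < min Mt Mr) : 0 ≤ sR Mt Mr j :=
  le_trans zero_le_one (sR_ge_one hj)

lemma gam_mono (j : ℕ) : Monotone (gam j) := fun x y h => by
  unfold gam; exact min_le_min (max_le_max h le_rfl) le_rfl

lemma gam_pos {j : ℕ} {x : ℝ} (hx : 0 < x) : 0 < gam j x := by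
  unfold gam
  have : (0:ℝ) < max x j := lt_of_lt_of_le hx (le_max_left _ _)
  positivity

lemma gam_ge (j : ℕ) (x : ℝ) : (j:ℝ) ≤ gam j x := by
  unfold gam
  exact le_min (le_max_right _ _) (by linarith)

lemma gam_le (j : ℕ) (x : ℝ) : gam j x ≤ (j:ℝ)+1 := min_le_right _ _

lemma gam_of_ge {j : ℕ} {x : ℝ} (h : (j:ℝ)+1 ≤ x) : gam j x = (j:ℝ)+1 := by
  unfold gam
  rw [max_eq_left (by linarith), min_eq_right h]

lemma gam_of_le {j : ℕ} {x : ℝ} (h : x ≤ (j:ℝ)) : gam j x = (j:ℝ) := by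
  unfold gam
  rw [max_eq_right h, min_eq_left (by linarith)]

lemma gam_of_mem {j : ℕ} {x : ℝ} (h1 : (j:ℝ) ≤ x) (h2 : x ≤ (j:ℝ)+1) : gam j x = x := by
  unfold gam
  rw [max_eq_left h1, min_eq_left h2]

lemma gam_ge_self {j : ℕ} {x : ℝ} (h : gam j x < (j:ℝ)+1) : x ≤ gam j x := by
  unfold gam at *
  rcases le_total x (j:ℝ) with h1 | h1
  · exact le_trans h1 (le_min (le_max_right _ _) (by linarith))
  · rw [max_eq_left h1] at *
    rcases le_total x ((j:ℝ)+1) with h2 | h2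
    · rw [min_eq_left h2]
    · rw [min_eq_right h2] at h; linarith

lemma dS_M (Mt Mr : ℕ) : dS Mt Mr (min Mt Mr : ℕ) = 0 := by
  unfold dS
  apply Finset.sum_eq_zero
  intro j hj
  rw [Finset.mem_range] at hj
  have : (j:ℝ)+1 ≤ (min Mt Mr : ℕ) := by exact_mod_cast hj
  rw [gam_of_ge this]; ring

lemma FS_M (Mt Mr : ℕ) : FS Mt Mr (min Mt Mr : ℕ) = 0 := by
  unfold FS
  apply Finset.sum_eq_zero
  intro j hj
  rw [Finset.mem_range] at hj
  have : (j:ℝ)+1 ≤ (min Mt Mr : ℕ) := by exact_mod_cast hj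
  rw [gam_of_ge this, div_self (by positivity), Real.log_one]; ring

lemma dS_anti {Mt Mr : ℕ} {x y : ℝ} (h : x ≤ y) : dS Mt Mr y ≤ dS Mt Mr x := by
  unfold dS
  apply Finset.sum_le_sum
  intro j hj
  rw [Finset.mem_range] at hj
  have := gam_mono j h
  nlinarith [sR_nonneg (Mt := Mt) (Mr := Mr) hj]

lemma dS_nonneg {Mt Mr : ℕ} {x : ℝ} (h : x ≤ (min Mt Mr : ℕ)) : 0 ≤ dS Mt Mr x := by
  rw [← dS_M Mt Mr]; exact dS_anti h



lemma floor_seg {M : ℕ} {x : ℝ} (hx0 : 0 ≤ x) (hxM : x < (M:ℝ)) :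
    ∃ j : ℕ, j < M ∧ (j:ℝ) ≤ x ∧ x < (j:ℝ)+1 := by
  refine ⟨Nat.floor x, ?_, Nat.floor_le hx0, Nat.lt_floor_add_one x⟩
  have h1 : (Nat.floor x : ℝ) ≤ x := Nat.floor_le hx0
  have : (Nat.floor x : ℝ) < (M:ℝ) := lt_of_le_of_lt h1 hxM
  exact_mod_cast this

lemma dS_strict_anti {Mt Mr : ℕ} {x y : ℝ} (hx0 : 0 ≤ x) (h : x < y)
    (hyM : y ≤ (min Mt Mr : ℕ)) : dS Mt Mr y < dS Mt Mr x := by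
  have hxM : x < ((min Mt Mr : ℕ):ℝ) := lt_of_lt_of_le h hyM
  obtain ⟨j, hjM, hj1, hj2⟩ := floor_seg hx0 hxM
  unfold dS
  apply Finset.sum_lt_sum
  · intro i hi
    rw [Finset.mem_range] at hi
    have := gam_mono i (le_of_lt h)
    nlinarith [sR_nonneg (Mt := Mt) (Mr := Mr) hi]
  · refine ⟨j, Finset.mem_range.mpr hjM, ?_⟩
    have hgx : gam j x = x := gam_of_mem hj1 (le_of_lt hj2)
    have hgy : x < gam j y := by
      unfold gam
      exact lt_min (lt_of_lt_of_le h (le_max_left _ _)) hj2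
    have hs := sR_ge_one (Mt := Mt) (Mr := Mr) hjM
    rw [hgx]
    nlinarith

lemma FS_strict_anti {Mt Mr : ℕ} {x y : ℝ} (hx0 : 0 < x) (h : x < y)
    (hyM : y ≤ (min Mt Mr : ℕ)) : FS Mt Mr y < FS Mt Mr x := by
  have hxM : x < ((min Mt Mr : ℕ):ℝ) := lt_of_lt_of_le h hyM
  obtain ⟨j, hjM, hj1, hj2⟩ := floor_seg (le_of_lt hx0) hxM
  unfold FS
  apply Finset.sum_lt_sum
  · intro i hi
    rw [Finset.mem_range] at hi
    have hgm := gam_mono i (le_of_lt h)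
    have hpx : 0 < gam i x := gam_pos hx0
    have hpy : 0 < gam i y := gam_pos (lt_trans hx0 h)
    have : ((i:ℝ)+1)/gam i y ≤ ((i:ℝ)+1)/gam i x :=
      div_le_div_of_nonneg_left (by positivity) hpx hgm
    have hlog := Real.log_le_log (by positivity) this
    nlinarith [sR_nonneg (Mt := Mt) (Mr := Mr) hi]
  · refine ⟨j, Finset.mem_range.mpr hjM, ?_⟩
    have hgx : gam j x = x := gam_of_mem hj1 (le_of_lt hj2)
    have hgy : x < gam j y := by
      unfold gam
      exact lt_min (lt_of_lt_of_le h (le_max_left _ _)) hj2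
    have hpy : 0 < gam j y := lt_trans hx0 hgy
    have : ((j:ℝ)+1)/gam j y < ((j:ℝ)+1)/gam j x := by
      rw [hgx]
      exact div_lt_div_of_pos_left (by positivity) hx0 hgy
    have hlog := Real.log_lt_log (by positivity) this
    have hs := sR_ge_one (Mt := Mt) (Mr := Mr) hjM
    nlinarith

lemma FS_sub_eq {Mt Mr : ℕ} {y z : ℝ} (hy : 0 < y) (hz : 0 < z) :
    FS Mt Mr y - FS Mt Mr z
      = ∑ j ∈ Finset.range (min Mt Mr), sR Mt Mr j * Real.log (gam j z / gam j y) := by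
  unfold FS
  rw [← Finset.sum_sub_distrib]
  apply Finset.sum_congr rfl
  intro j hj
  have h1 : 0 < gam j y := gam_pos hy
  have h2 : 0 < gam j z := gam_pos hz
  have h3 : (0:ℝ) < (j:ℝ)+1 := by positivity
  rw [← mul_sub, Real.log_div (by positivity) (ne_of_gt h1),
    Real.log_div (by positivity) (ne_of_gt h2), Real.log_div (ne_of_gt h2) (ne_of_gt h1)]
  ring

lemma dS_sub_eq {Mt Mr : ℕ} (y z : ℝ) :
    dS Mt Mr y - dS Mt Mr z
      = ∑ j ∈ Finset.range (min Mt Mr), sR Mt Mr j * (gam j z - gam j y) := by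
  unfold dS
  rw [← Finset.sum_sub_distrib]
  apply Finset.sum_congr rfl
  intro j hj
  ring

/-- Key lemma: `F(y) - F(z) ≤ (d(y) - d(z))/y` for `0 < y ≤ z`. -/
lemma keyF3 {Mt Mr : ℕ} {y z : ℝ} (hy : 0 < y) (hyz : y ≤ z) :
    FS Mt Mr y - FS Mt Mr z ≤ (dS Mt Mr y - dS Mt Mr z)/y := by
  rw [FS_sub_eq hy (lt_of_lt_of_le hy hyz), dS_sub_eq, Finset.sum_div]
  apply Finset.sum_le_sum
  intro j hj
  rw [Finset.mem_range] at hj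
  have hgm := gam_mono j hyz
  have hpy : 0 < gam j y := gam_pos hy
  have hpz : 0 < gam j z := gam_pos (lt_of_lt_of_le hy hyz)
  have hs := sR_nonneg (Mt := Mt) (Mr := Mr) hj
  rcases eq_or_lt_of_le hgm with heq | hlt
  · rw [← heq, div_self (ne_of_gt hpy), Real.log_one, sub_self, mul_zero]
    simp
  · have hylt : y ≤ gam j y := gam_ge_self (lt_of_lt_of_le hlt (gam_le j z))
    have hlog : Real.log (gam j z / gam j y) ≤ gam j z / gam j y - 1 :=
      Real.log_le_sub_one_of_pos (by positivity)
    have h2 : gam j z / gam j y - 1 = (gam j z - gam j y)/gam j y := by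
      field_simp
    have h3 : (gam j z - gam j y)/gam j y ≤ (gam j z - gam j y)/y :=
      div_le_div_of_nonneg_left (by linarith) hy hylt
    rw [mul_div_assoc]
    apply mul_le_mul_of_nonneg_left _ hs
    calc Real.log (gam j z / gam j y) ≤ (gam j z - gam j y)/gam j y := by linarith
    _ ≤ (gam j z - gam j y)/y := h3

/-- Reverse key lemma with ratio bound. -/
lemma keyF7 {Mt Mr : ℕ} {y z q : ℝ} (hy : 0 < y) (hyz : y ≤ z) (hq : z ≤ q*y) :
    (dS Mt Mr y - dS Mt Mr z)/y ≤ q * (FS Mt Mr y - FS Mt Mr z) := by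
  rw [FS_sub_eq hy (lt_of_lt_of_le hy hyz), dS_sub_eq, Finset.sum_div, Finset.mul_sum]
  apply Finset.sum_le_sum
  intro j hj
  rw [Finset.mem_range] at hj
  have hgm := gam_mono j hyz
  have hpy : 0 < gam j y := gam_pos hy
  have hpz : 0 < gam j z := gam_pos (lt_of_lt_of_le hy hyz)
  have hs := sR_nonneg (Mt := Mt) (Mr := Mr) hj
  rcases eq_or_lt_of_le hgm with heq | hlt
  · rw [← heq, div_self (ne_of_gt hpy), Real.log_one, sub_self, mul_zero]
    simp
  · have hylt : y ≤ gam j y := gam_ge_self (lt_of_lt_of_le hlt (gam_le j z))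
    have hgzz : gam j z ≤ z := by
      unfold gam
      rcases le_total z (j:ℝ) with h1 | h1
      · exfalso
        have : gam j z ≤ (j:ℝ) := by
          unfold gam; rw [max_eq_right h1]; exact min_le_left _ _
        have := gam_ge j y
        linarith
      · rw [max_eq_left h1]; exact min_le_left _ _
    have hgq : gam j z ≤ q * y := le_trans hgzz hq
    -- log (gz/gy) ≥ (gz - gy)/gz
    have hlog : (gam j z - gam j y)/gam j z ≤ Real.log (gam j z / gam j y) := by
      have h1 : Real.log (gam j y / gam j z) ≤ gam j y / gam j z - 1 :=
        Real.log_le_sub_one_of_pos (by positivity)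
      have h2 : Real.log (gam j y / gam j z) = - Real.log (gam j z / gam j y) := by
        rw [← Real.log_inv]
        norm_num
      rw [h2] at h1
      have h3 : gam j y / gam j z - 1 = -((gam j z - gam j y)/gam j z) := by
        field_simp
        ring
      rw [h3] at h1
      linarith
    rw [mul_div_assoc]
    rw [mul_left_comm]
    apply mul_le_mul_of_nonneg_left _ hs
    have hq1 : (gam j z - gam j y)/y ≤ q * ((gam j z - gam j y)/gam j z) := by
      have h0 : 0 ≤ gam j z - gam j y := by linarith
      have h1 : 1/y ≤ q/gam j z := by
        rw [div_le_div_iff₀ hy hpz]; linarith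
      calc (gam j z - gam j y)/y = (gam j z - gam j y) * (1/y) := by ring
      _ ≤ (gam j z - gam j y) * (q/gam j z) := mul_le_mul_of_nonneg_left h1 h0
      _ = q * ((gam j z - gam j y)/gam j z) := by ring
    have hqpos : 0 ≤ q := by nlinarith
    calc (gam j z - gam j y)/y ≤ q * ((gam j z - gam j y)/gam j z) := hq1
    _ ≤ q * Real.log (gam j z / gam j y) := mul_le_mul_of_nonneg_left hlog hqpos


lemma TEL (Mt Mr : ℕ) : ∀ m, m ≤ min Mt Mr →
    ∑ j ∈ Finset.Ico m (min Mt Mr), sR Mt Mr j = ((Mt:ℝ) - m) * ((Mr:ℝ) - m) := by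
  suffices H : ∀ d m, m + d = min Mt Mr →
      ∑ j ∈ Finset.Ico m (min Mt Mr), sR Mt Mr j = ((Mt:ℝ) - m) * ((Mr:ℝ) - m) by
    intro m hm; exact H (min Mt Mr - m) m (by omega)
  intro d
  induction d with
  | zero =>
    intro m hm
    rw [show m = min Mt Mr by omega]
    rw [Finset.Ico_self, Finset.sum_empty]
    rcases le_total Mt Mr with h | h
    · rw [min_eq_left h]; ring
    · rw [min_eq_right h]; ring
  | succ d ih =>
    intro m hm
    have hmlt : m < min Mt Mr := by omega
    rw [Finset.sum_eq_sum_Ico_succ_bot hmlt, ih (m+1) (by omega)]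
    unfold sR
    push_cast
    have h1 : (m:ℝ) + 1 ≤ Mt := by exact_mod_cast (show m + 1 ≤ Mt by omega)
    have h2 : (m:ℝ) + 1 ≤ Mr := by exact_mod_cast (show m + 1 ≤ Mr by omega)
    ring

lemma dS_seg {Mt Mr k : ℕ} {x : ℝ} (hk : k < min Mt Mr) (h1 : (k:ℝ) ≤ x)
    (h2 : x ≤ (k:ℝ) + 1) :
    dS Mt Mr x = ((Mt : ℝ) - k) * ((Mr : ℝ) - k)
      + (x - k) * (((Mt : ℝ) - ((k:ℝ) + 1)) * ((Mr : ℝ) - ((k:ℝ) + 1))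
        - ((Mt : ℝ) - k) * ((Mr : ℝ) - k)) := by
  unfold dS
  rw [Finset.range_eq_Ico, ← Finset.sum_Ico_consecutive _ (Nat.zero_le k) (le_of_lt hk)]
  rw [Finset.sum_eq_sum_Ico_succ_bot hk]
  have e1 : ∑ j ∈ Finset.Ico 0 k, sR Mt Mr j * ((j:ℝ)+1 - gam j x) = 0 := by
    apply Finset.sum_eq_zero
    intro j hj
    rw [Finset.mem_Ico] at hj
    have : (j:ℝ)+1 ≤ x := le_trans (by exact_mod_cast (show j+1 ≤ k by omega)) h1
    rw [gam_of_ge this]; ring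
  have e2 : ∑ j ∈ Finset.Ico (k+1) (min Mt Mr), sR Mt Mr j * ((j:ℝ)+1 - gam j x)
      = ((Mt:ℝ) - ((k:ℝ)+1)) * ((Mr:ℝ) - ((k:ℝ)+1)) := by
    have : ∀ j ∈ Finset.Ico (k+1) (min Mt Mr),
        sR Mt Mr j * ((j:ℝ)+1 - gam j x) = sR Mt Mr j := by
      intro j hj
      rw [Finset.mem_Ico] at hj
      have : x ≤ (j:ℝ) := le_trans h2 (by exact_mod_cast (show k+1 ≤ j by omega))
      rw [gam_of_le this]; ring
    rw [Finset.sum_congr rfl this, TEL Mt Mr (k+1) (by omega)]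
    push_cast; ring
  rw [e1, e2, gam_of_mem h1 h2]
  unfold sR
  push_cast; ring

lemma bridge {Mt Mr : ℕ} (hMt : 1 ≤ Mt) (hMr : 1 ≤ Mr) {dstar : ℝ → ℝ}
    (hd : ∀ k : ℕ, k < min Mt Mr → ∀ x ∈ Set.Icc (k : ℝ) ((k : ℝ) + 1),
      dstar x = ((Mt : ℝ) - k) * ((Mr : ℝ) - k)
        + (x - k) * (((Mt : ℝ) - (k + 1)) * ((Mr : ℝ) - (k + 1))
          - ((Mt : ℝ) - k) * ((Mr : ℝ) - k)))
    {x : ℝ} (hx0 : 0 ≤ x) (hxM : x ≤ ((min Mt Mr : ℕ):ℝ)) : dstar x = dS Mt Mr x := by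
  have hM : 1 ≤ min Mt Mr := by omega
  rcases lt_or_eq_of_le hxM with hlt | heq
  · obtain ⟨j, hjM, hj1, hj2⟩ := floor_seg hx0 hlt
    rw [hd j hjM x ⟨hj1, le_of_lt hj2⟩, dS_seg hjM hj1 (le_of_lt hj2)]
  · set k := min Mt Mr - 1 with hkdef
    have hk : k < min Mt Mr := by omega
    have hc1 : ((k : ℕ):ℝ) = ((min Mt Mr : ℕ):ℝ) - 1 := by
      rw [hkdef, Nat.cast_sub hM]; norm_num
    have h1 : (k:ℝ) ≤ x := by rw [hc1, heq]; linarith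
    have h2 : x ≤ (k:ℝ) + 1 := by rw [hc1, heq]; linarith
    rw [hd k hk x ⟨h1, h2⟩, dS_seg hk h1 h2]

lemma abs_eq {Mt Mr : ℕ} : |(Mr : ℝ) - (Mt : ℝ)| = (Mt:ℝ) + Mr - 2*((min Mt Mr : ℕ):ℝ) := by
  rcases le_total Mt Mr with h | h
  · rw [min_eq_left h, abs_of_nonneg (sub_nonneg.mpr ((Nat.cast_le (α := ℝ)).mpr h))]
    ring
  · rw [min_eq_right h, abs_of_nonpos (sub_nonpos.mpr ((Nat.cast_le (α := ℝ)).mpr h))]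
    ring

lemma c_sum {Mt Mr : ℕ} {c : ℕ → ℝ} (hc0 : c 0 = 0)
    (hc : ∀ i : ℕ, 1 ≤ i → i ≤ min Mt Mr - 1 →
      c i = c (i - 1) + (|(Mr : ℝ) - (Mt : ℝ)| + 2 * (i : ℝ) - 1)
        * Real.log ((((min Mt Mr : ℕ) : ℝ) - i + 1) / (((min Mt Mr : ℕ): ℝ) - i))) :
    ∀ i, i ≤ min Mt Mr - 1 →
      c i = ∑ j ∈ Finset.Ico (min Mt Mr - i) (min Mt Mr),
        sR Mt Mr j * Real.log (((j:ℝ)+1) / (j:ℝ)) := by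
  intro i
  induction i with
  | zero =>
    intro _
    rw [Nat.sub_zero, Finset.Ico_self, Finset.sum_empty, hc0]
  | succ i ih =>
    intro hi
    have hM : 1 ≤ min Mt Mr := by omega
    rw [hc (i+1) (by omega) hi]
    have hie : (i + 1) - 1 = i := by omega
    rw [hie, ih (by omega)]
    set M := min Mt Mr with hMdef
    have hmlt : M - (i+1) < M := by omega
    rw [Finset.sum_eq_sum_Ico_succ_bot hmlt]
    have hse : M - (i+1) + 1 = M - i := by omega
    rw [hse]
    have hcast : ((M - (i+1) : ℕ):ℝ) = (M:ℝ) - (i:ℝ) - 1 := by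
      rw [Nat.cast_sub (by omega)]; push_cast; ring
    have hcoef : sR Mt Mr (M - (i+1)) = |(Mr : ℝ) - (Mt : ℝ)| + 2 * ((i:ℝ)+1) - 1 := by
      unfold sR
      rw [abs_eq, hcast]
      ring
    have harg : (((M - (i+1) : ℕ)):ℝ) + 1 = (M:ℝ) - ((i:ℝ)+1) + 1 := by rw [hcast]; ring
    have harg2 : (((M - (i+1) : ℕ)):ℝ) = (M:ℝ) - ((i:ℝ)+1) := by rw [hcast]; ring
    rw [hcoef, harg, harg2]
    push_cast
    ring


lemma sum_arith (δ : ℝ) : ∀ m : ℕ, ∑ i ∈ Finset.range m, (δ + 2*((i:ℝ)+1) - 1)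
    = m*δ + (m:ℝ)^2 := by
  intro m
  induction m with
  | zero => simp
  | succ m ih => rw [Finset.sum_range_succ, ih]; push_cast; ring

section X0

variable {Mt Mr p : ℕ} {b : ℝ} {c : ℕ → ℝ}
  (hMt : 1 ≤ Mt) (hMr : 1 ≤ Mr) (hb : 0 < b)
  (hp1 : 1 ≤ p) (hp2 : p ≤ min Mt Mr)

lemma sp_pos (hMt : 1 ≤ Mt) (hMr : 1 ≤ Mr) (hp1 : 1 ≤ p) (hp2 : p ≤ min Mt Mr) :
    0 < |(Mr : ℝ) - (Mt : ℝ)| + 2 * (p : ℝ) - 1 := by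
  have h : |(Mr : ℝ) - (Mt : ℝ)| + 2 * (p : ℝ) - 1 = sR Mt Mr (min Mt Mr - p) := by
    unfold sR
    rw [abs_eq, Nat.cast_sub hp2]
    ring
  rw [h]
  exact lt_of_lt_of_le zero_lt_one (sR_ge_one (by omega))

lemma x0_pos (hp2 : p ≤ min Mt Mr) :
    0 < (((min Mt Mr : ℕ):ℝ) - p + 1) * Real.exp (-(b - c (p-1)) / (|(Mr : ℝ) - (Mt : ℝ)| + 2 * (p : ℝ) - 1)) := by
  have h1 : (p:ℝ) ≤ ((min Mt Mr : ℕ):ℝ) := Nat.cast_le.mpr hp2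
  have : (0:ℝ) < ((min Mt Mr : ℕ):ℝ) - p + 1 := by linarith
  positivity

lemma x0_le (hMt : 1 ≤ Mt) (hMr : 1 ≤ Mr) (hp1 : 1 ≤ p) (hp2 : p ≤ min Mt Mr)
    (hbp1 : c (p - 1) ≤ b) :
    (((min Mt Mr : ℕ):ℝ) - p + 1) * Real.exp (-(b - c (p-1)) / (|(Mr : ℝ) - (Mt : ℝ)| + 2 * (p : ℝ) - 1))
      ≤ ((min Mt Mr : ℕ):ℝ) - p + 1 := by
  have hsp := sp_pos hMt hMr hp1 hp2
  have h1 : (p:ℝ) ≤ ((min Mt Mr : ℕ):ℝ) := Nat.cast_le.mpr hp2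
  have hexp : Real.exp (-(b - c (p-1)) / (|(Mr : ℝ) - (Mt : ℝ)| + 2 * (p : ℝ) - 1)) ≤ 1 := by
    rw [Real.exp_le_one_iff]
    apply div_nonpos_of_nonpos_of_nonneg <;> linarith
  nlinarith

lemma x0_ge (hMt : 1 ≤ Mt) (hMr : 1 ≤ Mr) (hp1 : 1 ≤ p) (hp2 : p ≤ min Mt Mr)
    (hc : ∀ i : ℕ, 1 ≤ i → i ≤ min Mt Mr - 1 →
      c i = c (i - 1) + (|(Mr : ℝ) - (Mt : ℝ)| + 2 * (i : ℝ) - 1)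
        * Real.log ((((min Mt Mr : ℕ) : ℝ) - i + 1) / (((min Mt Mr : ℕ): ℝ) - i)))
    (hbp2 : p < min Mt Mr → b < c p) :
    ((min Mt Mr : ℕ):ℝ) - p ≤
    (((min Mt Mr : ℕ):ℝ) - p + 1) * Real.exp (-(b - c (p-1)) / (|(Mr : ℝ) - (Mt : ℝ)| + 2 * (p : ℝ) - 1)) := by
  have hsp := sp_pos hMt hMr hp1 hp2
  rcases eq_or_lt_of_le hp2 with heq | hlt
  · have h0 : ((min Mt Mr : ℕ):ℝ) - p = 0 := by rw [heq]; ring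
    have hx := x0_pos (b := b) (c := c) hp2
    linarith
  · have hcp := hbp2 hlt
    rw [hc p hp1 (by omega)] at hcp
    have hpe : p - 1 + 1 = p := by omega
    set sp := |(Mr : ℝ) - (Mt : ℝ)| + 2 * (p : ℝ) - 1
    set A := ((min Mt Mr : ℕ):ℝ) - p with hA
    have hA1 : 1 ≤ A := by
      rw [hA]
      have : (p:ℝ) + 1 ≤ ((min Mt Mr : ℕ):ℝ) := by exact_mod_cast (show p + 1 ≤ min Mt Mr by omega)
      linarith
    have hApos : 0 < A := by linarith
    have hlog : (b - c (p-1))/sp < Real.log ((A+1)/A) := by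
      rw [div_lt_iff₀ hsp]
      nlinarith
    have hexp : A/(A+1) < Real.exp (-(b - c (p-1))/sp) := by
      have h2 : Real.exp (-Real.log ((A+1)/A)) < Real.exp (-(b - c (p-1))/sp) := by
        apply Real.exp_lt_exp.mpr
        rw [neg_div]
        linarith
      rwa [Real.exp_neg, Real.exp_log (by positivity), inv_div] at h2
    calc A = (A+1) * (A/(A+1)) := by field_simp
    _ ≤ (A+1) * Real.exp (-(b - c (p-1))/sp) := by
        apply mul_le_mul_of_nonneg_left (le_of_lt hexp) (by linarith)

lemma FS_x0 (hMt : 1 ≤ Mt) (hMr : 1 ≤ Mr)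
    (hc0 : c 0 = 0)
    (hc : ∀ i : ℕ, 1 ≤ i → i ≤ min Mt Mr - 1 →
      c i = c (i - 1) + (|(Mr : ℝ) - (Mt : ℝ)| + 2 * (i : ℝ) - 1)
        * Real.log ((((min Mt Mr : ℕ) : ℝ) - i + 1) / (((min Mt Mr : ℕ): ℝ) - i)))
    (hp1 : 1 ≤ p) (hp2 : p ≤ min Mt Mr) (hbp1 : c (p - 1) ≤ b)
    (hbp2 : p < min Mt Mr → b < c p) :
    FS Mt Mr ((((min Mt Mr : ℕ):ℝ) - p + 1) *
      Real.exp (-(b - c (p-1)) / (|(Mr : ℝ) - (Mt : ℝ)| + 2 * (p : ℝ) - 1))) = b := by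
  have hsp := sp_pos hMt hMr hp1 hp2
  set sp := |(Mr : ℝ) - (Mt : ℝ)| + 2 * (p : ℝ) - 1 with hspdef
  set E := -(b - c (p-1)) / sp with hEdef
  set x₀ := (((min Mt Mr : ℕ):ℝ) - p + 1) * Real.exp E with hx0def
  have h3 : x₀ ≤ ((min Mt Mr : ℕ):ℝ) - p + 1 := x0_le hMt hMr hp1 hp2 hbp1
  have h4 : ((min Mt Mr : ℕ):ℝ) - p ≤ x₀ := x0_ge hMt hMr hp1 hp2 hc hbp2
  set M := min Mt Mr with hMdef
  set np := M - p with hnpdef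
  have hnpcast : ((np:ℕ):ℝ) = ((M:ℕ):ℝ) - p := by
    rw [hnpdef, Nat.cast_sub hp2]
  have hnplt : np < M := by omega
  unfold FS
  rw [Finset.range_eq_Ico, ← Finset.sum_Ico_consecutive _ (Nat.zero_le np) (le_of_lt hnplt),
    Finset.sum_eq_sum_Ico_succ_bot hnplt]
  have e1 : ∑ j ∈ Finset.Ico 0 np, sR Mt Mr j * Real.log (((j:ℝ)+1) / gam j x₀) = 0 := by
    apply Finset.sum_eq_zero
    intro j hj
    rw [Finset.mem_Ico] at hj
    have hj1 : (j:ℝ)+1 ≤ ((M:ℕ):ℝ) - p := by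
      rw [← hnpcast]; exact_mod_cast (show j+1 ≤ np by omega)
    have : (j:ℝ)+1 ≤ x₀ := le_trans hj1 h4
    rw [gam_of_ge this, div_self (by positivity), Real.log_one, mul_zero]
  have e2 : gam np x₀ = x₀ := by
    apply gam_of_mem
    · rw [hnpcast]; exact h4
    · rw [hnpcast]; linarith
  have e3 : ∑ j ∈ Finset.Ico (np+1) M, sR Mt Mr j * Real.log (((j:ℝ)+1) / gam j x₀)
      = ∑ j ∈ Finset.Ico (np+1) M, sR Mt Mr j * Real.log (((j:ℝ)+1) / (j:ℝ)) := by
    apply Finset.sum_congr rfl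
    intro j hj
    rw [Finset.mem_Ico] at hj
    have : x₀ ≤ (j:ℝ) := by
      have : ((M:ℕ):ℝ) - p + 1 ≤ (j:ℝ) := by
        rw [← hnpcast]
        exact_mod_cast (show np+1 ≤ j by omega)
      linarith
    rw [gam_of_le this]
  have e4 : ∑ j ∈ Finset.Ico (np+1) M, sR Mt Mr j * Real.log (((j:ℝ)+1) / (j:ℝ)) = c (p-1) := by
    have hcs := c_sum (Mt := Mt) (Mr := Mr) hc0 hc (p-1) (by omega)
    have hnum : min Mt Mr - (p-1) = np + 1 := by omega
    rw [hnum] at hcs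
    exact hcs.symm
  have e5 : sR Mt Mr np = sp := by
    unfold sR
    rw [hspdef, abs_eq, hnpcast]
    ring
  have e6 : Real.log ((((np:ℕ):ℝ)+1) / x₀) = -E := by
    rw [hnpcast, hx0def]
    have hpos : (0:ℝ) < ((M:ℕ):ℝ) - p + 1 := by
      have : (p:ℝ) ≤ ((M:ℕ):ℝ) := Nat.cast_le.mpr hp2
      linarith
    rw [show (((M:ℕ):ℝ) - p + 1) / ((((M:ℕ):ℝ) - p + 1) * Real.exp E) = (Real.exp E)⁻¹ by
      field_simp]
    rw [← Real.exp_neg, Real.log_exp]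
  rw [e1, e2, e3, e4, e5, e6]
  rw [hEdef]
  field_simp
  ring

lemma dS_x0 (hMt : 1 ≤ Mt) (hMr : 1 ≤ Mr)
    (hp1 : 1 ≤ p) (hp2 : p ≤ min Mt Mr) (hbp1 : c (p - 1) ≤ b)
    (hc : ∀ i : ℕ, 1 ≤ i → i ≤ min Mt Mr - 1 →
      c i = c (i - 1) + (|(Mr : ℝ) - (Mt : ℝ)| + 2 * (i : ℝ) - 1)
        * Real.log ((((min Mt Mr : ℕ) : ℝ) - i + 1) / (((min Mt Mr : ℕ): ℝ) - i)))
    (hbp2 : p < min Mt Mr → b < c p) :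
    dS Mt Mr ((((min Mt Mr : ℕ):ℝ) - p + 1) *
      Real.exp (-(b - c (p-1)) / (|(Mr : ℝ) - (Mt : ℝ)| + 2 * (p : ℝ) - 1)))
    = (∑ i ∈ Finset.range (p - 1), (|(Mr : ℝ) - (Mt : ℝ)| + 2 * ((i : ℝ) + 1) - 1))
        + (((min Mt Mr : ℕ):ℝ) - p + 1) * (|(Mr : ℝ) - (Mt : ℝ)| + 2 * (p : ℝ) - 1)
          * (1 - Real.exp (-(b - c (p - 1))
              / (|(Mr : ℝ) - (Mt : ℝ)| + 2 * (p : ℝ) - 1))) := by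
  have hsp := sp_pos hMt hMr hp1 hp2
  set sp := |(Mr : ℝ) - (Mt : ℝ)| + 2 * (p : ℝ) - 1 with hspdef
  set E := -(b - c (p-1)) / sp with hEdef
  set x₀ := (((min Mt Mr : ℕ):ℝ) - p + 1) * Real.exp E with hx0def
  have h3 : x₀ ≤ ((min Mt Mr : ℕ):ℝ) - p + 1 := x0_le hMt hMr hp1 hp2 hbp1
  have h4 : ((min Mt Mr : ℕ):ℝ) - p ≤ x₀ := x0_ge hMt hMr hp1 hp2 hc hbp2
  set M := min Mt Mr with hMdef
  set np := M - p with hnpdef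
  have hnpcast : ((np:ℕ):ℝ) = ((M:ℕ):ℝ) - p := by
    rw [hnpdef, Nat.cast_sub hp2]
  have hnplt : np < M := by omega
  unfold dS
  rw [Finset.range_eq_Ico, ← Finset.sum_Ico_consecutive _ (Nat.zero_le np) (le_of_lt hnplt),
    Finset.sum_eq_sum_Ico_succ_bot hnplt]
  have e1 : ∑ j ∈ Finset.Ico 0 np, sR Mt Mr j * (((j:ℝ)+1) - gam j x₀) = 0 := by
    apply Finset.sum_eq_zero
    intro j hj
    rw [Finset.mem_Ico] at hj
    have hj1 : (j:ℝ)+1 ≤ ((M:ℕ):ℝ) - p := by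
      rw [← hnpcast]; exact_mod_cast (show j+1 ≤ np by omega)
    have : (j:ℝ)+1 ≤ x₀ := le_trans hj1 h4
    rw [gam_of_ge this, sub_self, mul_zero]
  have e2 : gam np x₀ = x₀ := by
    apply gam_of_mem
    · rw [hnpcast]; exact h4
    · rw [hnpcast]; linarith
  have e3 : ∑ j ∈ Finset.Ico (np+1) M, sR Mt Mr j * (((j:ℝ)+1) - gam j x₀)
      = ∑ j ∈ Finset.Ico (np+1) M, sR Mt Mr j := by
    apply Finset.sum_congr rfl
    intro j hj
    rw [Finset.mem_Ico] at hj
    have : x₀ ≤ (j:ℝ) := by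
      have : ((M:ℕ):ℝ) - p + 1 ≤ (j:ℝ) := by
        rw [← hnpcast]
        exact_mod_cast (show np+1 ≤ j by omega)
      linarith
    rw [gam_of_le this]; ring
  have e4 : ∑ j ∈ Finset.Ico (np+1) M, sR Mt Mr j
      = ((Mt:ℝ) - (((np+1:ℕ)):ℝ)) * ((Mr:ℝ) - (((np+1:ℕ)):ℝ)) := TEL Mt Mr (np+1) (by omega)
  have e5 : sR Mt Mr np = sp := by
    unfold sR
    rw [hspdef, abs_eq, hnpcast]
    ring
  rw [e1, e2, e3, e4, e5]
  -- now pure algebra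
  have hAB : ((Mt:ℝ) - ((M:ℕ):ℝ)) * ((Mr:ℝ) - ((M:ℕ):ℝ)) = 0 := by
    have := TEL Mt Mr M le_rfl
    rw [Finset.Ico_self, Finset.sum_empty] at this
    linarith [this]
  have hdelta : |(Mr : ℝ) - (Mt : ℝ)| = (Mt:ℝ) + Mr - 2*((M:ℕ):ℝ) := abs_eq
  have hsum : ∑ i ∈ Finset.range (p - 1), (|(Mr : ℝ) - (Mt : ℝ)| + 2 * ((i : ℝ) + 1) - 1)
      = ((p:ℝ)-1) * |(Mr : ℝ) - (Mt : ℝ)| + ((p:ℝ)-1)^2 := by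
    rw [sum_arith]
    have : ((p-1:ℕ):ℝ) = (p:ℝ) - 1 := by
      rw [Nat.cast_sub hp1]; norm_num
    rw [this]
  have hcast1 : (((np+1:ℕ)):ℝ) = ((M:ℕ):ℝ) - p + 1 := by
    push_cast [hnpcast]; ring
  rw [hnpcast, hsum, hcast1, hx0def, hspdef, hdelta]
  linear_combination hAB

end X0

lemma perstep {Mt Mr : ℕ} {b V y z Sk Sk1 : ℝ} (hb : 0 < b) (hy : 0 < y) (hyz : y ≤ z)
    (hG : V - dS Mt Mr z ≤ b * Sk1) :
    (V - dS Mt Mr y)/(b*y) + FS Mt Mr y / b - Sk/y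
      ≤ (Sk1 - Sk)/y + ((V - dS Mt Mr z)/(b*z) + FS Mt Mr z / b - Sk1/z) := by
  have hz : 0 < z := lt_of_lt_of_le hy hyz
  have h2 := keyF3 (Mt := Mt) (Mr := Mr) hy hyz
  set A := dS Mt Mr y
  set B := dS Mt Mr z
  set Fy := FS Mt Mr y
  set Fz := FS Mt Mr z
  have hinv : 1/z ≤ 1/y := one_div_le_one_div_of_le hy hyz
  have hid : ((Sk1 - Sk)/y + ((V - B)/(b*z) + Fz / b - Sk1/z))
      - ((V - A)/(b*y) + Fy / b - Sk/y)
      = (b*Sk1 - (V - B))*(1/y - 1/z)*(1/b) + ((A - B)/y - (Fy - Fz))*(1/b) := by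
    field_simp
    ring
  have ht1 : 0 ≤ (b*Sk1 - (V - B))*(1/y - 1/z)*(1/b) := by
    apply mul_nonneg (mul_nonneg (by linarith) (by linarith)) (by positivity)
  have ht2 : 0 ≤ ((A - B)/y - (Fy - Fz))*(1/b) := by
    apply mul_nonneg (by linarith) (by positivity)
  linarith

lemma dS_continuous (Mt Mr : ℕ) : Continuous (dS Mt Mr) := by
  unfold dS
  apply continuous_finset_sum
  intro j _
  apply Continuous.mul continuous_const
  apply Continuous.sub continuous_const
  unfold gam
  exact (continuous_id.max continuous_const).min continuous_const

set_option maxHeartbeats 2000000 in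
lemma upper_bound {Mt Mr : ℕ} (hMt : 1 ≤ Mt) (hMr : 1 ≤ Mr) {b : ℝ} (hb : 0 < b)
    {dstar : ℝ → ℝ}
    (hd : ∀ k : ℕ, k < min Mt Mr → ∀ x ∈ Set.Icc (k : ℝ) ((k : ℝ) + 1),
      dstar x = ((Mt : ℝ) - k) * ((Mr : ℝ) - k)
        + (x - k) * (((Mt : ℝ) - (k + 1)) * ((Mr : ℝ) - (k + 1))
          - ((Mt : ℝ) - k) * ((Mr : ℝ) - k)))
    {x₀ : ℝ} (hx0pos : 0 < x₀) (hx0M : x₀ ≤ ((min Mt Mr : ℕ):ℝ))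
    (hFx0 : FS Mt Mr x₀ = b) {n : ℕ} {t r : ℕ → ℝ}
    (ht0 : ∀ i, 0 ≤ t i) (ht1 : (∑ i ∈ Finset.range n, t i) = 1)
    (hr0 : 0 ≤ r 0) (hrm : ∀ i j, i ≤ j → j < n → r i ≤ r j)
    (hrM : ∀ i < n, r i ≤ ((min Mt Mr : ℕ):ℝ)) :
    ((Finset.range (n + 1)).inf' Finset.nonempty_range_add_one (fun k =>
        if k = n then b * ∑ i ∈ Finset.range n, t i * r i
        else dstar (r k) + b * ∑ i ∈ Finset.range k, t i * r i)) ≤ dS Mt Mr x₀ := by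
  by_contra hcon
  push_neg at hcon
  -- n = 0 is impossible
  rcases Nat.eq_zero_or_pos n with hn0 | hnpos
  · subst hn0; simp at ht1
  set M' : ℝ := ((min Mt Mr : ℕ):ℝ) with hM'def
  have hM'pos : (0:ℝ) < M' := by
    rw [hM'def]
    exact_mod_cast (show 0 < min Mt Mr by omega)
  set V := ((Finset.range (n + 1)).inf' Finset.nonempty_range_add_one (fun k =>
        if k = n then b * ∑ i ∈ Finset.range n, t i * r i
        else dstar (r k) + b * ∑ i ∈ Finset.range k, t i * r i)) with hVdef
  set L := dS Mt Mr x₀ with hLdef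
  set D0 := dS Mt Mr 0 with hD0def
  have hLD0 : L < D0 := dS_strict_anti le_rfl hx0pos hx0M
  have hL0 : 0 ≤ L := dS_nonneg hx0M
  set W := min V ((L + D0)/2) with hWdef
  have hW1 : L < W := lt_min hcon (by linarith)
  have hW2 : W < D0 := lt_of_le_of_lt (min_le_right _ _) (by linarith)
  have hWV : W ≤ V := min_le_left _ _
  have hWpos : 0 < W := lt_of_le_of_lt hL0 hW1
  -- find ρ with dS ρ = W
  have hsurj : Set.Icc (dS Mt Mr M') (dS Mt Mr 0) ⊆ dS Mt Mr '' Set.Icc 0 M' :=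
    intermediate_value_Icc' (le_of_lt hM'pos) (dS_continuous Mt Mr).continuousOn
  have hdSM : dS Mt Mr M' = 0 := dS_M Mt Mr
  obtain ⟨ρ, hρmem, hρW⟩ := hsurj (by
    rw [hdSM]
    exact ⟨le_of_lt hWpos, le_of_lt hW2⟩)
  obtain ⟨hρ0, hρM⟩ := hρmem
  have hρpos : 0 < ρ := by
    rcases eq_or_lt_of_le hρ0 with h | h
    · exfalso
      rw [← h] at hρW
      rw [hD0def] at hW2
      rw [hρW] at hW2
      exact lt_irrefl _ hW2
    · exact h
  have hρx0 : ρ < x₀ := by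
    by_contra hge
    push_neg at hge
    have : dS Mt Mr ρ ≤ dS Mt Mr x₀ := dS_anti hge
    rw [hρW] at this
    linarith
  -- partial sums
  set S : ℕ → ℝ := fun k => ∑ i ∈ Finset.range k, t i * r i with hSdef
  set u : ℕ → ℝ := fun j => if j = n then M' else max (r j) ρ with hudef
  have hu_n : u n = M' := by simp [hudef]
  have hu_lt : ∀ j, j ≠ n → u j = max (r j) ρ := by
    intro j hj; simp [hudef, hj]
  have hFSM : FS Mt Mr M' = 0 := FS_M Mt Mr
  have hrj0 : ∀ j, j < n → 0 ≤ r j := fun j hj => le_trans hr0 (hrm 0 j (Nat.zero_le j) hj)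
  have hSnn : ∀ j, j ≤ n → 0 ≤ S j := by
    intro j hj
    apply Finset.sum_nonneg
    intro i hi
    rw [Finset.mem_range] at hi
    exact mul_nonneg (ht0 i) (hrj0 i (by omega))
  have hu_ge : ∀ j, ρ ≤ u j := by
    intro j
    by_cases h : j = n
    · rw [h, hu_n]; linarith
    · rw [hu_lt j h]; exact le_max_right _ _
  have hu_pos : ∀ j, 0 < u j := fun j => lt_of_lt_of_le hρpos (hu_ge j)
  have hu_leM : ∀ j, j ≤ n → u j ≤ M' := by
    intro j hj
    by_cases h : j = n
    · rw [h, hu_n]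
    · rw [hu_lt j h]
      exact max_le (hrM j (by omega)) hρM
  have hu_mono : ∀ j k, j ≤ k → k ≤ n → u j ≤ u k := by
    intro j k hjk hkn
    by_cases hk : k = n
    · rw [hk, hu_n]
      exact hu_leM j (by omega)
    · have hkn' : k < n := by omega
      have hjn : j ≠ n := by omega
      rw [hu_lt k hk, hu_lt j hjn]
      exact max_le_max (hrm j k hjk hkn') le_rfl
  -- value constraints
  have hVk : ∀ k, k < n → V ≤ dstar (r k) + b * S k := by
    intro k hk
    have hmem : k ∈ Finset.range (n+1) := Finset.mem_range.mpr (by omega)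
    have h1 := Finset.inf'_le (b := k) (fun k =>
        if k = n then b * ∑ i ∈ Finset.range n, t i * r i
        else dstar (r k) + b * ∑ i ∈ Finset.range k, t i * r i) hmem
    simp only [if_neg (show k ≠ n by omega)] at h1
    exact h1
  have hVn : V ≤ b * S n := by
    have hmem : n ∈ Finset.range (n+1) := Finset.mem_range.mpr (by omega)
    have h1 := Finset.inf'_le (b := n) (fun k =>
        if k = n then b * ∑ i ∈ Finset.range n, t i * r i
        else dstar (r k) + b * ∑ i ∈ Finset.range k, t i * r i) hmem
    simp only [if_pos rfl] at h1
    exact h1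
  have hbridge : ∀ j, j < n → dstar (r j) = dS Mt Mr (r j) :=
    fun j hj => bridge hMt hMr hd (hrj0 j hj) (hrM j hj)
  -- budget constraint at clipped levels
  have hcS : ∀ j, j ≤ n → W - dS Mt Mr (u j) ≤ b * S j := by
    intro j hj
    by_cases hjn : j = n
    · rw [hjn, hu_n, hdSM, sub_zero]
      linarith
    · have hjlt : j < n := by omega
      rw [hu_lt j hjn]
      rcases le_total ρ (r j) with h | h
      · rw [max_eq_left h, ← hbridge j hjlt]
        have := hVk j hjlt
        linarith
      · rw [max_eq_right h, hρW]
        have := hSnn j hj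
        nlinarith
  -- main downward induction
  have main : ∀ m k, k + m = n →
      (W - dS Mt Mr (u k))/(b * u k) + FS Mt Mr (u k)/b - S k/(u k)
        ≤ ∑ i ∈ Finset.Ico k n, (S (i+1) - S i)/u i := by
    intro m
    induction m with
    | zero =>
      intro k hk
      have hkn : k = n := by omega
      subst hkn
      rw [Finset.Ico_self, Finset.sum_empty, hu_n, hdSM, hFSM, sub_zero, zero_div, add_zero]
      have h2 : W / b ≤ S k := by
        rw [div_le_iff₀ hb]
        nlinarith [hVn]
      have h3 : W/(b * M') = (W/b)/M' := by rw [div_div]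
      have h4 : (W/b)/M' ≤ S k/M' := by gcongr
      rw [h3]
      linarith
    | succ m ih =>
      intro k hk
      have hklt : k < n := by omega
      rw [Finset.sum_eq_sum_Ico_succ_bot hklt]
      have ih2 := ih (k+1) (by omega)
      have hstep := perstep (Mt := Mt) (Mr := Mr) (V := W) (Sk := S k) (Sk1 := S (k+1))
        hb (hu_pos k) (hu_mono k (k+1) (by omega) (by omega)) (hcS (k+1) (by omega))
      linarith
  have hmain := main n 0 (by omega)
  have hS0 : S 0 = 0 := by rw [hSdef]; simp
  -- r 0 ≤ ρ
  have hr0ρ : r 0 ≤ ρ := by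
    by_contra hgt
    push_neg at hgt
    have h1 : dS Mt Mr (r 0) < dS Mt Mr ρ := dS_strict_anti (le_of_lt hρpos) hgt (hrM 0 hnpos)
    have h2 := hVk 0 hnpos
    rw [hbridge 0 hnpos, hS0, mul_zero, add_zero] at h2
    rw [hρW] at h1
    linarith
  have hu0 : u 0 = ρ := by
    rw [hu_lt 0 (by omega)]
    exact max_eq_right hr0ρ
  rw [hu0, hS0, hρW, sub_self, zero_div, zero_div, sub_zero, zero_add] at hmain
  -- the sum is at most 1
  have hsum1 : ∑ i ∈ Finset.Ico 0 n, (S (i+1) - S i)/u i ≤ 1 := by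
    rw [← ht1, Finset.range_eq_Ico]
    apply Finset.sum_le_sum
    intro i hi
    rw [Finset.mem_Ico] at hi
    have hSdiff : S (i+1) - S i = t i * r i := by
      rw [hSdef]; simp [Finset.sum_range_succ]
    rw [hSdiff, div_le_iff₀ (hu_pos i)]
    have hru : r i ≤ u i := by
      rw [hu_lt i (by omega)]
      exact le_max_left _ _
    nlinarith [ht0 i, hrj0 i hi.2, hu_pos i]
  -- conclude
  have hFρ : FS Mt Mr ρ / b ≤ 1 := le_trans hmain hsum1
  have hFmono : FS Mt Mr x₀ < FS Mt Mr ρ := FS_strict_anti hρpos hρx0 hx0M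
  rw [hFx0] at hFmono
  have : FS Mt Mr ρ ≤ b := by
    rw [div_le_one hb] at hFρ
    exact hFρ
  linarith


set_option maxHeartbeats 2000000 in
lemma lower_bound {Mt Mr : ℕ} (hMt : 1 ≤ Mt) (hMr : 1 ≤ Mr) {b : ℝ} (hb : 0 < b)
    {dstar : ℝ → ℝ}
    (hd : ∀ k : ℕ, k < min Mt Mr → ∀ x ∈ Set.Icc (k : ℝ) ((k : ℝ) + 1),
      dstar x = ((Mt : ℝ) - k) * ((Mr : ℝ) - k)
        + (x - k) * (((Mt : ℝ) - (k + 1)) * ((Mr : ℝ) - (k + 1))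
          - ((Mt : ℝ) - k) * ((Mr : ℝ) - k)))
    {x₀ : ℝ} (hx0pos : 0 < x₀) (hx0M : x₀ ≤ ((min Mt Mr : ℕ):ℝ))
    (hFx0 : FS Mt Mr x₀ = b) {n : ℕ} (hn : 1 ≤ n) :
    ∃ t r : ℕ → ℝ, (∀ i, 0 ≤ t i) ∧ (∑ i ∈ Finset.range n, t i) = 1 ∧
      (0 ≤ r 0) ∧ (∀ i j, i ≤ j → j < n → r i ≤ r j) ∧
      (∀ i < n, r i ≤ ((min Mt Mr : ℕ):ℝ)) ∧
      dS Mt Mr x₀ * Real.exp (-(Real.log (((min Mt Mr : ℕ):ℝ)/x₀))/n) ≤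
        ((Finset.range (n + 1)).inf' Finset.nonempty_range_add_one (fun k =>
          if k = n then b * ∑ i ∈ Finset.range n, t i * r i
          else dstar (r k) + b * ∑ i ∈ Finset.range k, t i * r i)) := by
  set M' : ℝ := ((min Mt Mr : ℕ):ℝ) with hM'def
  have hM'pos : (0:ℝ) < M' := lt_of_lt_of_le hx0pos hx0M
  set L := dS Mt Mr x₀ with hLdef
  have hL0 : 0 ≤ L := dS_nonneg hx0M
  set a := Real.log (M'/x₀) with hadef
  have ha0 : 0 ≤ a := Real.log_nonneg ((one_le_div hx0pos).mpr hx0M)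
  set q := Real.exp (a/n) with hqdef
  have hq1 : 1 ≤ q := by
    rw [hqdef, ← Real.exp_zero]
    apply Real.exp_le_exp.mpr
    positivity
  have hqpos : 0 < q := lt_of_lt_of_le zero_lt_one hq1
  set x : ℕ → ℝ := fun i => x₀ * q^i with hxdef
  have hxpos : ∀ i, 0 < x i := fun i => by positivity
  have hxmono : ∀ i j, i ≤ j → x i ≤ x j := by
    intro i j hij
    have : q^i ≤ q^j := pow_le_pow_right₀ hq1 hij
    have := le_of_lt hx0pos
    simp only [hxdef]
    nlinarith
  have hx0e : x 0 = x₀ := by simp [hxdef]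
  have hxn : x n = M' := by
    simp only [hxdef, hqdef]
    rw [← Real.exp_nat_mul]
    have hne : (n:ℝ) ≠ 0 := by positivity
    rw [mul_div_cancel₀ _ hne, hadef, Real.exp_log (by positivity)]
    field_simp
  have hxM : ∀ i, i ≤ n → x i ≤ M' := by
    intro i hi
    rw [← hxn]
    exact hxmono i n hi
  have hqstep : ∀ i, x (i+1) = x i * q := by
    intro i
    simp only [hxdef]
    rw [pow_succ]
    ring
  set τ : ℕ → ℝ := fun i => (dS Mt Mr (x i) - dS Mt Mr (x (i+1)))/(b * x i) with hτdef
  have hτ0 : ∀ i, 0 ≤ τ i := by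
    intro i
    have h1 : dS Mt Mr (x (i+1)) ≤ dS Mt Mr (x i) := dS_anti (hxmono i (i+1) (by omega))
    have := hxpos i
    apply div_nonneg (by linarith) (by positivity)
  set T := ∑ i ∈ Finset.range n, τ i with hTdef
  have hFSM : FS Mt Mr M' = 0 := FS_M Mt Mr
  have hdSM : dS Mt Mr M' = 0 := dS_M Mt Mr
  have hdiv : ∀ i, τ i = ((dS Mt Mr (x i) - dS Mt Mr (x (i+1)))/(x i))/b := by
    intro i
    rw [hτdef, div_div]
    ring_nf
  have htele : ∑ i ∈ Finset.range n, (FS Mt Mr (x i) - FS Mt Mr (x (i+1)))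
      = FS Mt Mr (x 0) - FS Mt Mr (x n) :=
    Finset.sum_range_sub' (fun i => FS Mt Mr (x i)) n
  have hteleval : ∑ i ∈ Finset.range n, (FS Mt Mr (x i) - FS Mt Mr (x (i+1))) = b := by
    rw [htele, hx0e, hxn, hFx0, hFSM, sub_zero]
  have hT1 : 1 ≤ T := by
    have hstep : ∀ i ∈ Finset.range n, (FS Mt Mr (x i) - FS Mt Mr (x (i+1)))/b ≤ τ i := by
      intro i _
      have h2 := keyF3 (Mt := Mt) (Mr := Mr) (hxpos i) (hxmono i (i+1) (by omega))
      rw [hdiv i]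
      gcongr
    calc (1:ℝ) = (∑ i ∈ Finset.range n, (FS Mt Mr (x i) - FS Mt Mr (x (i+1))))/b := by
          rw [hteleval, div_self (ne_of_gt hb)]
    _ = ∑ i ∈ Finset.range n, (FS Mt Mr (x i) - FS Mt Mr (x (i+1)))/b := by
          rw [Finset.sum_div]
    _ ≤ ∑ i ∈ Finset.range n, τ i := Finset.sum_le_sum hstep
  have hTpos : 0 < T := lt_of_lt_of_le zero_lt_one hT1
  have hTq : T ≤ q := by
    have hstep : ∀ i ∈ Finset.range n, τ i ≤ q * ((FS Mt Mr (x i) - FS Mt Mr (x (i+1)))/b) := by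
      intro i _
      have h7 := keyF7 (Mt := Mt) (Mr := Mr) (q := q) (hxpos i) (hxmono i (i+1) (by omega))
        (le_of_eq (by rw [hqstep i]; ring))
      rw [hdiv i, ← mul_div_assoc]
      gcongr
    calc T ≤ ∑ i ∈ Finset.range n, q * ((FS Mt Mr (x i) - FS Mt Mr (x (i+1)))/b) :=
          Finset.sum_le_sum hstep
    _ = q * ((∑ i ∈ Finset.range n, (FS Mt Mr (x i) - FS Mt Mr (x (i+1))))/b) := by
          rw [← Finset.mul_sum, Finset.sum_div]
    _ = q := by rw [hteleval, div_self (ne_of_gt hb), mul_one]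
  -- the construction
  set tt : ℕ → ℝ := fun i => if i < n then τ i / T else 0 with httdef
  set rr : ℕ → ℝ := fun i => x (min i (n-1)) with hrrdef
  have htt : ∀ i, i < n → tt i = τ i / T := fun i h => by simp [httdef, h]
  have htt' : ∀ i, ¬ i < n → tt i = 0 := fun i h => by simp [httdef, h]
  have hrr : ∀ i, rr i = x (min i (n-1)) := fun i => by simp [hrrdef]
  refine ⟨tt, rr, ?_, ?_, ?_, ?_, ?_, ?_⟩
  · intro i
    by_cases h : i < n
    · rw [htt i h]
      exact div_nonneg (hτ0 i) (le_of_lt hTpos)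
    · rw [htt' i h]
  · rw [Finset.sum_congr rfl (fun i hi => htt i (Finset.mem_range.mp hi)), ← Finset.sum_div]
    rw [← hTdef, div_self (ne_of_gt hTpos)]
  · rw [hrr 0]
    exact le_of_lt (hxpos _)
  · intro i j hij hjn
    rw [hrr i, hrr j]
    exact hxmono _ _ (by omega)
  · intro i hi
    rw [hrr i]
    exact hxM _ (by omega)
  -- value bound
  · have hkey : ∀ k, k ≤ n →
        b * ∑ i ∈ Finset.range k, tt i * rr i = (L - dS Mt Mr (x k))/T := by
      intro k hk
      have he : ∀ i ∈ Finset.range k, tt i * rr i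
          = (dS Mt Mr (x i) - dS Mt Mr (x (i+1)))/(b*T) := by
        intro i hi
        rw [Finset.mem_range] at hi
        have hiln : i < n := by omega
        have hmin : min i (n-1) = i := by omega
        rw [htt i hiln, hrr i, hmin, hτdef]
        have hxi := hxpos i
        field_simp
      rw [Finset.sum_congr rfl he, ← Finset.sum_div,
        Finset.sum_range_sub' (fun i => dS Mt Mr (x i)) k, hx0e, ← hLdef]
      field_simp
    apply Finset.le_inf'
    intro k hk
    rw [Finset.mem_range] at hk
    have hkn : k ≤ n := by omega
    have hLq : L * Real.exp (-a/n) ≤ L / T := by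
      have he : Real.exp (-a/n) = 1/q := by
        rw [hqdef, one_div, ← Real.exp_neg, neg_div]
      rw [he]
      calc L * (1/q) = L/q := by ring
      _ ≤ L/T := by
          apply div_le_div_of_nonneg_left hL0 hTpos hTq
    by_cases hkeq : k = n
    · simp only [if_pos hkeq]
      rw [hkey n le_rfl, hxn, hdSM, sub_zero]
      exact hLq
    · simp only [if_neg hkeq]
      have hklt : k < n := by omega
      have hmin : min k (n-1) = k := by omega
      have hxk0 : 0 ≤ x k := le_of_lt (hxpos k)
      have hbr : dstar (rr k) = dS Mt Mr (x k) := by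
        rw [hrr k, hmin]
        exact bridge hMt hMr hd hxk0 (hxM k hkn)
      rw [hbr, hkey k hkn]
      have hdk : 0 ≤ dS Mt Mr (x k) := dS_nonneg (hxM k hkn)
      have h2 : L/T ≤ dS Mt Mr (x k) + (L - dS Mt Mr (x k))/T := by
        rw [div_le_iff₀ hTpos, add_mul, div_mul_cancel₀ _ (ne_of_gt hTpos)]
        nlinarith
      exact le_trans hLq h2

end Stmt4Aux

open Stmt4Aux in
set_option maxHeartbeats 1000000 in
/-- The optimal distortion exponent of layered source coding with progressive
transmission (LS) over an `M_t × M_r` MIMO channel, in the limit of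
infinitely many layers: with thresholds `c_0 = 0`,
`c_i = c_{i-1} + (|M_r - M_t| + 2i - 1) ln((M_* - i + 1)/(M_* - i))`
for `i = 1, …, M_* - 1` and `c_{M_*} = ∞`, and `p` the unique index with
`c_{p-1} ≤ b < c_p`, the limit of `Δ n` equals
`Σ_{i=1}^{p-1}(|M_r - M_t| + 2i - 1)
  + (M_* - p + 1)(|M_r - M_t| + 2p - 1)(1 - e^{-(b - c_{p-1})/(|M_r-M_t|+2p-1)})`. -/
theorem stmt_4 (Mt Mr : ℕ) (hMt : 1 ≤ Mt) (hMr : 1 ≤ Mr) (b : ℝ) (hb : 0 < b)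
    (dstar : ℝ → ℝ)
    (hd : ∀ k : ℕ, k < min Mt Mr → ∀ x ∈ Set.Icc (k : ℝ) ((k : ℝ) + 1),
      dstar x = ((Mt : ℝ) - k) * ((Mr : ℝ) - k)
        + (x - k) * (((Mt : ℝ) - (k + 1)) * ((Mr : ℝ) - (k + 1))
          - ((Mt : ℝ) - k) * ((Mr : ℝ) - k)))
    (Δ : ℕ → ℝ)
    (hΔ : ∀ n, Δ n = sSup { v : ℝ | ∃ t r : ℕ → ℝ,
        (∀ i, 0 ≤ t i) ∧ (∑ i ∈ Finset.range n, t i) = 1 ∧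
        (0 ≤ r 0) ∧ (∀ i j, i ≤ j → j < n → r i ≤ r j) ∧
        (∀ i < n, r i ≤ (min Mt Mr : ℝ)) ∧
        v = (Finset.range (n + 1)).inf' Finset.nonempty_range_add_one (fun k =>
          if k = n then b * ∑ i ∈ Finset.range n, t i * r i
          else dstar (r k) + b * ∑ i ∈ Finset.range k, t i * r i) })
    (c : ℕ → ℝ) (hc0 : c 0 = 0)
    (hc : ∀ i : ℕ, 1 ≤ i → i ≤ min Mt Mr - 1 →
      c i = c (i - 1) + (|(Mr : ℝ) - (Mt : ℝ)| + 2 * (i : ℝ) - 1)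
        * Real.log (((min Mt Mr : ℝ) - i + 1) / ((min Mt Mr : ℝ) - i)))
    (p : ℕ) (hp1 : 1 ≤ p) (hp2 : p ≤ min Mt Mr)
    (hbp1 : c (p - 1) ≤ b) (hbp2 : p < min Mt Mr → b < c p) :
    Tendsto Δ atTop (nhds
      ((∑ i ∈ Finset.range (p - 1), (|(Mr : ℝ) - (Mt : ℝ)| + 2 * ((i : ℝ) + 1) - 1))
        + ((min Mt Mr : ℝ) - p + 1) * (|(Mr : ℝ) - (Mt : ℝ)| + 2 * (p : ℝ) - 1)
          * (1 - Real.exp (-(b - c (p - 1))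
              / (|(Mr : ℝ) - (Mt : ℝ)| + 2 * (p : ℝ) - 1))))) := by
  simp only [← Nat.cast_min] at hc hΔ ⊢
  set M' : ℝ := ((min Mt Mr : ℕ):ℝ) with hM'def
  set x₀ : ℝ := (M' - p + 1) * Real.exp (-(b - c (p-1))
      / (|(Mr : ℝ) - (Mt : ℝ)| + 2 * (p : ℝ) - 1)) with hx0def
  have hx0pos : 0 < x₀ := x0_pos hp2
  have hx0le : x₀ ≤ M' - p + 1 := x0_le hMt hMr hp1 hp2 hbp1
  have hx0M : x₀ ≤ M' := by
    have hp1' : (1:ℝ) ≤ p := by exact_mod_cast hp1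
    linarith
  have hFx0 : FS Mt Mr x₀ = b := FS_x0 hMt hMr hc0 hc hp1 hp2 hbp1 hbp2
  have hdx0 : dS Mt Mr x₀
      = (∑ i ∈ Finset.range (p - 1), (|(Mr : ℝ) - (Mt : ℝ)| + 2 * ((i : ℝ) + 1) - 1))
        + (((min Mt Mr : ℕ) : ℝ) - p + 1) * (|(Mr : ℝ) - (Mt : ℝ)| + 2 * (p : ℝ) - 1)
          * (1 - Real.exp (-(b - c (p - 1))
              / (|(Mr : ℝ) - (Mt : ℝ)| + 2 * (p : ℝ) - 1))) :=
    dS_x0 hMt hMr hp1 hp2 hbp1 hc hbp2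
  rw [← hdx0]
  have hL0 : 0 ≤ dS Mt Mr x₀ := dS_nonneg hx0M
  -- upper bound
  have hub : ∀ n v, v ∈ { v : ℝ | ∃ t r : ℕ → ℝ,
      (∀ i, 0 ≤ t i) ∧ (∑ i ∈ Finset.range n, t i) = 1 ∧
      (0 ≤ r 0) ∧ (∀ i j, i ≤ j → j < n → r i ≤ r j) ∧
      (∀ i < n, r i ≤ ((min Mt Mr : ℕ) : ℝ)) ∧
      v = (Finset.range (n + 1)).inf' Finset.nonempty_range_add_one (fun k =>
        if k = n then b * ∑ i ∈ Finset.range n, t i * r i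
        else dstar (r k) + b * ∑ i ∈ Finset.range k, t i * r i) } → v ≤ dS Mt Mr x₀ := by
    intro n v hv
    obtain ⟨t, r, ht0, ht1, hr0, hrm, hrM, hveq⟩ := hv
    rw [hveq]
    exact upper_bound hMt hMr hb hd hx0pos hx0M hFx0 ht0 ht1 hr0 hrm hrM
  have hΔub : ∀ n, Δ n ≤ dS Mt Mr x₀ := by
    intro n
    rw [hΔ n]
    exact Real.sSup_le (hub n) hL0
  have hΔlb : ∀ n : ℕ, 1 ≤ n →
      dS Mt Mr x₀ * Real.exp (-(Real.log (M'/x₀))/(n:ℝ)) ≤ Δ n := by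
    intro n hn
    obtain ⟨t, r, ht0, ht1, hr0, hrm, hrM, hval⟩ :=
      lower_bound hMt hMr hb hd hx0pos hx0M hFx0 hn
    rw [hΔ n]
    refine le_trans hval (le_csSup ⟨dS Mt Mr x₀, ?_⟩ ⟨t, r, ht0, ht1, hr0, hrm, hrM, rfl⟩)
    intro w hw
    exact hub n w hw
  -- limits
  have hg : Tendsto (fun n : ℕ => dS Mt Mr x₀ * Real.exp (-(Real.log (M'/x₀))/(n:ℝ)))
      atTop (nhds (dS Mt Mr x₀)) := by
    have h1 : Tendsto (fun n : ℕ => -(Real.log (M'/x₀))/(n:ℝ)) atTop (nhds 0) :=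
      tendsto_const_div_atTop_nhds_zero_nat _
    have h2 : Tendsto (fun n : ℕ => Real.exp (-(Real.log (M'/x₀))/(n:ℝ))) atTop
        (nhds (Real.exp 0)) := (Real.continuous_exp.tendsto 0).comp h1
    rw [Real.exp_zero] at h2
    have h3 := h2.const_mul (dS Mt Mr x₀)
    simpa using h3
  apply tendsto_of_tendsto_of_tendsto_of_le_of_le' hg tendsto_const_nhds
  · filter_upwards [Filter.eventually_ge_atTop 1] with n hn
    exact hΔlb n hn
  · filter_upwards with n
    exact hΔub n
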